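/- Let n ≥ 1 and let A_0 ⊆ A_1 ⊆ ⋯ ⊆ A_{n-1} ⊆ B be fields. Then the composite T_n = A_0 + A_1X + ⋯ + A_{n-1}X^{n-1} + X^nB[X] is atomic: every nonzero nonunit element of T_n is a finite product of irreducible elements of T_n. -/

import Mathlib

/-- The composite `T_n = A_0 + A_1 X + ⋯ + A_{n-1} X^{n-1} + X^n B[X]` for a chain of
subfields `A 0 ⊆ A 1 ⊆ ⋯ ⊆ A (n-1) ⊆ B` of a field `B`: the subring (an integral
domain) of `B[X]` of polynomials whose `i`-th coefficient lies in `A i` for all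
`i < n`. -/
def fieldCompositeN (B : Type*) [Field B] (n : ℕ) (A : ℕ → Subfield B)
    (hA : ∀ i j, i ≤ j → j < n → A i ≤ A j) : Subring (Polynomial B) where
  carrier := {f | ∀ i, i < n → f.coeff i ∈ A i}
  zero_mem' := fun i _ => by simpa using zero_mem (A i)
  one_mem' := fun i _ => by
    rw [Polynomial.coeff_one]
    split
    · exact one_mem (A i)
    · exact zero_mem (A i)
  add_mem' := fun hf hg i hi => by
    simpa [Polynomial.coeff_add] using add_mem (hf i hi) (hg i hi)
  neg_mem' := fun hf i hi => by
    simpa [Polynomial.coeff_neg] using neg_mem (s := A i) (hf i hi)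
  mul_mem' := by
    intro f g hf hg k hk
    rw [Polynomial.coeff_mul]
    refine sum_mem ?_
    rintro ⟨i, j⟩ hij
    rw [Finset.HasAntidiagonal.mem_antidiagonal] at hij
    have hi : i ≤ k := by omega
    have hj : j ≤ k := by omega
    exact mul_mem (hA i k hi hk (hf i (lt_of_le_of_lt hi hk)))
      (hA j k hj hk (hg j (lt_of_le_of_lt hj hk)))

/-- Let `n ≥ 1` and let `A 0 ⊆ A 1 ⊆ ⋯ ⊆ A (n-1) ⊆ B` be fields.  Then
the composite `T_n = A_0 + A_1 X + ⋯ + A_{n-1} X^{n-1} + X^n B[X]` is atomic: every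
nonzero nonunit element of `T_n` is a finite product of irreducible elements (atoms)
of `T_n`. -/
theorem fieldCompositeN_atomic (B : Type*) [Field B]
    (n : ℕ) (hn : 1 ≤ n) (A : ℕ → Subfield B)
    (hA : ∀ i j, i ≤ j → j < n → A i ≤ A j)
    (f : fieldCompositeN B n A hA) (hf0 : f ≠ 0) (hfu : ¬ IsUnit f) :
    ∃ l : Multiset (fieldCompositeN B n A hA),
      (∀ x ∈ l, Irreducible x) ∧ l.prod = f := by
  -- nonzero elements of degree 0 are units
  have hunit : ∀ g : fieldCompositeN B n A hA, g ≠ 0 →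
      (g : Polynomial B).natDegree = 0 → IsUnit g := by
    intro g hg0 hdeg
    have hgC : (g : Polynomial B) = Polynomial.C ((g : Polynomial B).coeff 0) :=
      Polynomial.eq_C_of_natDegree_eq_zero hdeg
    set a := (g : Polynomial B).coeff 0 with ha
    have ha0 : a ≠ 0 := by
      intro h
      apply hg0
      ext
      simp [hgC, h]
    have haA : a ∈ A 0 := g.2 0 hn
    have hmem : (Polynomial.C a⁻¹ : Polynomial B) ∈ fieldCompositeN B n A hA := by
      intro i hi
      rw [Polynomial.coeff_C]
      split
      · subst ‹i = 0›; exact inv_mem haA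
      · exact zero_mem (A i)
    refine IsUnit.of_mul_eq_one (a := g) ⟨Polynomial.C a⁻¹, hmem⟩ ?_
    ext
    push_cast
    rw [hgC, ← Polynomial.C_mul, mul_inv_cancel₀ ha0, Polynomial.C_1]
  have key : ∀ N : ℕ, ∀ g : fieldCompositeN B n A hA,
      (g : Polynomial B).natDegree ≤ N → g ≠ 0 → ¬ IsUnit g →
      ∃ l : Multiset (fieldCompositeN B n A hA),
        (∀ x ∈ l, Irreducible x) ∧ l.prod = g := by
    intro N
    induction N with
    | zero =>
      intro g hdeg hg0 hgu
      exact absurd (hunit g hg0 (Nat.le_zero.mp hdeg)) hgu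
    | succ N ih =>
      intro g hdeg hg0 hgu
      by_cases hirr : Irreducible g
      · exact ⟨{g}, by simpa using hirr, by simp⟩
      · rw [irreducible_iff] at hirr
        push_neg at hirr
        obtain ⟨p, q, hpq, hpu, hqu⟩ := hirr hgu
        have hp0 : p ≠ 0 := by rintro rfl; simp at hpq; exact hg0 hpq
        have hq0 : q ≠ 0 := by rintro rfl; simp at hpq; exact hg0 hpq
        have hp0' : (p : Polynomial B) ≠ 0 := fun h => hp0 (by ext; simp [h])
        have hq0' : (q : Polynomial B) ≠ 0 := fun h => hq0 (by ext; simp [h])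
        have hdp : 1 ≤ (p : Polynomial B).natDegree := by
          rcases Nat.eq_zero_or_pos (p : Polynomial B).natDegree with h | h
          · exact absurd (hunit p hp0 h) hpu
          · exact h
        have hdq : 1 ≤ (q : Polynomial B).natDegree := by
          rcases Nat.eq_zero_or_pos (q : Polynomial B).natDegree with h | h
          · exact absurd (hunit q hq0 h) hqu
          · exact h
        have hsum : (g : Polynomial B).natDegree
            = (p : Polynomial B).natDegree + (q : Polynomial B).natDegree := by
          rw [hpq]
          push_cast
          exact Polynomial.natDegree_mul hp0' hq0'
        obtain ⟨lp, hlp, hlpp⟩ := ih p (by omega) hp0 hpu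
        obtain ⟨lq, hlq, hlqp⟩ := ih q (by omega) hq0 hqu
        refine ⟨lp + lq, ?_, ?_⟩
        · intro x hx
          rcases Multiset.mem_add.mp hx with h | h
          · exact hlp x h
          · exact hlq x h
        · rw [Multiset.prod_add, hlpp, hlqp, hpq]
  exact key (f : Polynomial B).natDegree f le_rfl hf0 hfu
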